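/- If a = (a_1,...,a_k) is an integer partition with Δ(a) := (a_2+...+a_k) − a_1 < 0, then the star transposition graph G(a) has no Hamilton cycle. -/

import Mathlib

/-- `a`-multiset permutations: strings of length `n` over the alphabet `Fin k`
containing exactly `a c` occurrences of each symbol `c`. -/
def MultisetPerm (n k : ℕ) (a : Fin k → ℕ) : Type :=
  {x : Fin n → Fin k // ∀ c : Fin k, (Finset.univ.filter fun j => x j = c).card = a c}

instance (n k : ℕ) (a : Fin k → ℕ) : DecidableEq (MultisetPerm n k a) := by
  unfold MultisetPerm; infer_instance

/-- The star transposition graph `G(a)`: two multiset permutations are adjacent iff one is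
obtained from the other by transposing the first entry with another entry carrying a
distinct symbol. -/
def starGraph (n k : ℕ) (hn : 0 < n) (a : Fin k → ℕ) : SimpleGraph (MultisetPerm n k a) :=
  SimpleGraph.fromRel (fun x y =>
    ∃ j : Fin n, j ≠ ⟨0, hn⟩ ∧ x.1 j ≠ x.1 ⟨0, hn⟩ ∧ y.1 = x.1 ∘ Equiv.swap ⟨0, hn⟩ j)

instance (n k : ℕ) (a : Fin k → ℕ) : Fintype (MultisetPerm n k a) := by
  unfold MultisetPerm; infer_instance

lemma filter_comp_perm {m : ℕ} (σ : Equiv.Perm (Fin m)) (p : Fin m → Prop) [DecidablePred p] :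
    (Finset.univ.filter fun i => p (σ i)).card = (Finset.univ.filter p).card :=
  Finset.card_bij' (fun i _ => σ i) (fun i _ => σ.symm i)
    (by simp +contextual) (by simp +contextual) (by simp) (by simp)

/-- Applying a transposition of positions to a multiset permutation. -/
def swapMap {n k : ℕ} {a : Fin k → ℕ} (i j : Fin n) (x : MultisetPerm n k a) :
    MultisetPerm n k a :=
  ⟨x.1 ∘ Equiv.swap i j, fun c => by
    rw [← x.2 c]
    exact filter_comp_perm (Equiv.swap i j) (fun t => x.1 t = c)⟩

/-- Double counting: `n` times the number of strings starting with symbol `c0` equals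
`a c0` times the total number of strings. -/
lemma count_first {n k : ℕ} (hn : 0 < n) (a : Fin k → ℕ) (c0 : Fin k) :
    n * (Finset.univ.filter fun x : MultisetPerm n k a => x.1 ⟨0, hn⟩ = c0).card
      = a c0 * Fintype.card (MultisetPerm n k a) := by
  classical
  have h1 : ∀ j : Fin n,
      (Finset.univ.filter fun x : MultisetPerm n k a => x.1 j = c0).card
        = (Finset.univ.filter fun x : MultisetPerm n k a => x.1 ⟨0, hn⟩ = c0).card := by
    intro j
    refine Finset.card_bij' (fun x _ => swapMap ⟨0, hn⟩ j x) (fun x _ => swapMap ⟨0, hn⟩ j x)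
      ?_ ?_ ?_ ?_
    · intro x hx
      simp only [Finset.mem_filter, Finset.mem_univ, true_and] at hx ⊢
      show (x.1 ∘ Equiv.swap ⟨0, hn⟩ j) ⟨0, hn⟩ = c0
      simpa [Equiv.swap_apply_left] using hx
    · intro x hx
      simp only [Finset.mem_filter, Finset.mem_univ, true_and] at hx ⊢
      show (x.1 ∘ Equiv.swap ⟨0, hn⟩ j) j = c0
      simpa [Equiv.swap_apply_right] using hx
    · intro x _
      apply Subtype.ext
      show (x.1 ∘ Equiv.swap ⟨0, hn⟩ j) ∘ Equiv.swap ⟨0, hn⟩ j = x.1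
      funext t; simp
    · intro x _
      apply Subtype.ext
      show (x.1 ∘ Equiv.swap ⟨0, hn⟩ j) ∘ Equiv.swap ⟨0, hn⟩ j = x.1
      funext t; simp
  calc n * (Finset.univ.filter fun x : MultisetPerm n k a => x.1 ⟨0, hn⟩ = c0).card
      = ∑ j : Fin n,
          (Finset.univ.filter fun x : MultisetPerm n k a => x.1 j = c0).card := by
        rw [Finset.sum_congr rfl fun j _ => h1 j, Finset.sum_const, Finset.card_univ,
          Fintype.card_fin, smul_eq_mul]
    _ = ∑ j : Fin n, ∑ x : MultisetPerm n k a, if x.1 j = c0 then 1 else 0 :=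
        Finset.sum_congr rfl fun j _ => Finset.card_filter _ _
    _ = ∑ x : MultisetPerm n k a, ∑ j : Fin n, if x.1 j = c0 then 1 else 0 :=
        Finset.sum_comm
    _ = ∑ x : MultisetPerm n k a, a c0 := by
        refine Finset.sum_congr rfl fun x _ => ?_
        rw [← Finset.card_filter]
        exact x.2 c0
    _ = a c0 * Fintype.card (MultisetPerm n k a) := by
        rw [Finset.sum_const, Finset.card_univ, smul_eq_mul, mul_comm]

/-- If `Δ(a) = (a_2+…+a_k) − a_1 < 0`, then `G(a)` has no Hamilton cycle. -/
theorem stmt_4 (k n : ℕ) (hk : 0 < k) (hn : 0 < n) (a : Fin k → ℕ)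
    (hpos : ∀ c, 1 ≤ a c)
    (hsorted : ∀ c d : Fin k, c ≤ d → a d ≤ a c)
    (hsum : n = ∑ c, a c)
    (hdelta : n < 2 * a ⟨0, hk⟩) :
    ¬ ∃ (v : MultisetPerm n k a) (p : (starGraph n k hn a).Walk v v),
        p.IsHamiltonianCycle := by
  classical
  rintro ⟨v, p, hp⟩
  have z0 : Fin n := ⟨0, hn⟩
  -- adjacency changes the first symbol
  have hadj : ∀ {x y : MultisetPerm n k a}, (starGraph n k hn a).Adj x y →
      x.1 ⟨0, hn⟩ ≠ y.1 ⟨0, hn⟩ := by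
    intro x y h
    rw [starGraph, SimpleGraph.fromRel_adj] at h
    obtain ⟨hne, h | h⟩ := h
    · obtain ⟨j, hj0, hjne, hy⟩ := h
      rw [hy]
      simpa [Equiv.swap_apply_left] using (Ne.symm hjne)
    · obtain ⟨j, hj0, hjne, hx⟩ := h
      rw [hx]
      simpa [Equiv.swap_apply_left] using hjne
  set S := Finset.univ.filter
    fun x : MultisetPerm n k a => x.1 ⟨0, hn⟩ = (⟨0, hk⟩ : Fin k) with hS
  -- darts are nodup
  have hDnodup : p.darts.Nodup := by
    have h := hp.isCycle.isTrail.edges_nodup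
    rw [SimpleGraph.Walk.edges] at h
    exact List.Nodup.of_map _ h
  set DS : Finset (starGraph n k hn a).Dart := p.darts.toFinset with hDS
  have hDScard : DS.card = p.length := by
    rw [hDS, List.toFinset_card_of_nodup hDnodup, SimpleGraph.Walk.length_darts]
  -- every vertex is the second coordinate of some dart
  have hsnd : ∀ x : MultisetPerm n k a, ∃ d ∈ p.darts, d.snd = x := by
    intro x
    have hx : x ∈ p.support.tail := by
      have h2 := hp.isHamiltonian_tail.mem_support x
      rwa [SimpleGraph.Walk.support_tail_of_not_nil _ hp.isCycle.not_nil] at h2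
    rw [← SimpleGraph.Walk.map_snd_darts] at hx
    simpa using List.mem_map.mp hx
  -- every vertex is the first coordinate of some dart
  have hfst : ∀ x : MultisetPerm n k a, ∃ d ∈ p.darts, d.fst = x := by
    intro x
    have hx : x ∈ p.support := hp.mem_support x
    rw [← SimpleGraph.Walk.map_fst_darts_append] at hx
    rcases List.mem_append.mp hx with h | h
    · simpa using List.mem_map.mp h
    · have hxv : x = v := by simpa using h
      subst hxv
      cases p with
      | nil => exact (hp.isCycle.ne_nil rfl).elim
      | cons h q => exact ⟨_, List.mem_cons_self, rfl⟩
  set A := DS.filter (fun d => d.snd.1 ⟨0, hn⟩ = (⟨0, hk⟩ : Fin k)) with hA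
  set B := DS.filter (fun d => d.fst.1 ⟨0, hn⟩ = (⟨0, hk⟩ : Fin k)) with hB
  have hSA : S.card ≤ A.card := by
    refine Finset.card_le_card_of_surjOn (fun d => d.snd) ?_
    intro x hx
    simp only [hS, Finset.coe_filter, Set.mem_setOf_eq, Finset.mem_univ, true_and] at hx
    obtain ⟨d, hd, hds⟩ := hsnd x
    exact ⟨d, by simp [hA, hDS, hd, hds, hx], hds⟩
  have hSB : S.card ≤ B.card := by
    refine Finset.card_le_card_of_surjOn (fun d => d.fst) ?_
    intro x hx
    simp only [hS, Finset.coe_filter, Set.mem_setOf_eq, Finset.mem_univ, true_and] at hx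
    obtain ⟨d, hd, hds⟩ := hfst x
    exact ⟨d, by simp [hB, hDS, hd, hds, hx], hds⟩
  have hdisj : Disjoint A B := by
    rw [Finset.disjoint_left]
    intro d hdA hdB
    simp only [hA, hB, Finset.mem_filter] at hdA hdB
    exact hadj d.adj (hdB.2.trans hdA.2.symm)
  have hAB : A.card + B.card ≤ DS.card := by
    rw [← Finset.card_union_of_disjoint hdisj]
    exact Finset.card_le_card (Finset.union_subset (Finset.filter_subset _ _)
      (Finset.filter_subset _ _))
  have hlen : p.length = Fintype.card (MultisetPerm n k a) := hp.length_eq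
  have h2S : 2 * S.card ≤ Fintype.card (MultisetPerm n k a) := by omega
  have hcount := count_first hn a (⟨0, hk⟩ : Fin k)
  have hN : 0 < Fintype.card (MultisetPerm n k a) := Fintype.card_pos_iff.mpr ⟨v⟩
  rw [← hS] at hcount
  nlinarith [hcount, h2S, hdelta, hN, Nat.mul_le_mul_left n h2S,
    Nat.mul_lt_mul_of_lt_of_le hdelta (le_refl (Fintype.card (MultisetPerm n k a))) hN]
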